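/- Let A be a C*-algebra. The Cuntz subequivalence ≼_Cu is the smallest preorder ≤ on the positive cone A₊ such that for all a,b ∈ A₊, each of the following conditions implies a ≤ b: (i) a ∈ her(b), where her(b) is the hereditary C*-subalgebra generated by b; (ii) there exists x ∈ A such that a = x b x*; (iii) c ≤ b holds for every c ∈ A₊ for which there exists ε > 0 with c ∈ her((a − ε)₊). -/

import Mathlib

variable {A : Type*} [NonUnitalCStarAlgebra A] [PartialOrder A] [StarOrderedRing A]

/-- The hereditary C*-subalgebra generated by `b`, as a set: the norm-closure of `b * A * b`. -/
def her (b : A) : Set A := closure {y : A | ∃ x : A, y = b * x * b}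

/-- The cut-down `(a - ε)₊`, via the nonunital continuous functional calculus. -/
noncomputable def cutdown (a : A) (ε : ℝ) : A := cfcₙ (fun t : ℝ => max (t - ε) 0) a

/-- Cuntz subequivalence: `a ≼_Cu b` iff for every `ε > 0` there is `x` with
`‖a - x * b * x*‖ < ε`. -/
def CuntzLE (a b : A) : Prop := ∀ ε : ℝ, 0 < ε → ∃ x : A, ‖a - x * b * star x‖ < ε

/-- A preorder on the positive cone satisfying the three generating conditions:
(i) `a ∈ her b` implies `a ≤ b`; (ii) `a = x b x*` implies `a ≤ b`;
(iii) if `c ≤ b` for every positive `c` lying in `her ((a - ε)₊)` for some `ε > 0`,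
then `a ≤ b`. -/
def CuGood (L : {a : A // 0 ≤ a} → {a : A // 0 ≤ a} → Prop) : Prop :=
  Reflexive L ∧ Transitive L ∧
  (∀ a b : {a : A // 0 ≤ a}, (a : A) ∈ her (b : A) → L a b) ∧
  (∀ a b : {a : A // 0 ≤ a}, (∃ x : A, (a : A) = x * (b : A) * star x) → L a b) ∧
  (∀ a b : {a : A // 0 ≤ a},
    (∀ c : {a : A // 0 ≤ a},
      (∃ ε : ℝ, 0 < ε ∧ (c : A) ∈ her (cutdown (a : A) ε)) → L c b) → L a b)


set_option linter.unusedSectionVars false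
set_option linter.unusedVariables false
set_option maxHeartbeats 1000000

lemma basic_mem_her (b x : A) : b * x * b ∈ her b := subset_closure ⟨x, rfl⟩

lemma her_mul_mem {b u v : A} (hu : u ∈ her b) (hv : v ∈ her b) (y : A) :
    u * y * v ∈ her b := by
  refine map_mem_closure₂ (f := fun p q : A => p * y * q)
    (by fun_prop) hu hv ?_
  rintro p ⟨x, rfl⟩ q ⟨z, rfl⟩
  exact ⟨x * b * y * b * z, by simp [mul_assoc]⟩

lemma her_subset_her {a b : A} (h : a ∈ her b) : her a ⊆ her b :=
  closure_minimal (by rintro y ⟨x, rfl⟩; exact her_mul_mem h h x) isClosed_closure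

lemma smul_mem_her {b z : A} (c : ℝ) (hz : z ∈ her b) : c • z ∈ her b := by
  refine map_mem_closure (continuous_const_smul c) hz ?_
  rintro y ⟨x, rfl⟩
  exact ⟨c • x, by rw [mul_smul_comm, smul_mul_assoc]⟩

lemma quasi_nonneg {a : A} (ha : 0 ≤ a) {t : ℝ} (ht : t ∈ quasispectrum ℝ a) : 0 ≤ t :=
  quasispectrum_nonneg_of_nonneg a ha t ht

lemma quasi_le_norm {a : A} (ha : IsSelfAdjoint a) {t : ℝ} (ht : t ∈ quasispectrum ℝ a) :
    |t| ≤ ‖a‖ := by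
  have := norm_apply_le_norm_cfcₙ (id : ℝ → ℝ) a ht (by fun_prop) rfl ha
  rwa [cfcₙ_id ℝ a, Real.norm_eq_abs] at this

lemma sqrt_mul_self' (a : A) (ha : 0 ≤ a) : cfcₙ Real.sqrt a * cfcₙ Real.sqrt a = a := by
  rw [← cfcₙ_mul _ _ a (by fun_prop) (by simp) (by fun_prop) (by simp)]
  have : cfcₙ (fun t => Real.sqrt t * Real.sqrt t) a = cfcₙ (id : ℝ → ℝ) a :=
    cfcₙ_congr fun t ht => Real.mul_self_sqrt (quasi_nonneg ha ht)
  rw [this, cfcₙ_id ℝ a]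

set_option maxHeartbeats 1000000

lemma conj_pos {p : A} (hp : IsSelfAdjoint p) {z : A} (hz : 0 ≤ z) :
    0 ≤ z - p * z - z * p + p * z * p := by
  have hsq : cfcₙ Real.sqrt z * cfcₙ Real.sqrt z = z := sqrt_mul_self' z hz
  have hsqsa : IsSelfAdjoint (cfcₙ Real.sqrt z) := cfcₙ_predicate _ z
  set S := cfcₙ Real.sqrt z with hS
  have key : (S - p * S) * star (S - p * S) = z - p * z - z * p + p * z * p := by
    rw [star_sub, star_mul, hsqsa.star_eq, hp.star_eq]
    have : (S - p * S) * (S - S * p) = S * S - p * (S * S) - (S * S) * p + p * (S * S) * p := by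
      noncomm_ring
    rw [this, hsq]
  rw [← key]
  exact mul_star_self_nonneg _

lemma conj_mono {p : A} (hp : IsSelfAdjoint p) {z₁ z₂ : A} (hz : z₁ ≤ z₂) :
    z₁ - p * z₁ - z₁ * p + p * z₁ * p ≤ z₂ - p * z₂ - z₂ * p + p * z₂ * p := by
  rw [← sub_nonneg]
  have e : z₂ - p * z₂ - z₂ * p + p * z₂ * p - (z₁ - p * z₁ - z₁ * p + p * z₁ * p)
      = (z₂ - z₁) - p * (z₂ - z₁) - (z₂ - z₁) * p + p * (z₂ - z₁) * p := by noncomm_ring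
  rw [e]; exact conj_pos hp (sub_nonneg.mpr hz)

lemma T_cfc (g : ℝ → ℝ) (hgc : Continuous g) (hg0 : g 0 = 0) (h : A) (hh : IsSelfAdjoint h) :
    h - cfcₙ g h * h - h * cfcₙ g h + cfcₙ g h * h * cfcₙ g h
      = cfcₙ (fun t : ℝ => t - g t * t - t * g t + g t * t * g t) h := by
  have c1 : Continuous (fun t : ℝ => g t * t) := by fun_prop
  have c2 : Continuous (fun t : ℝ => t * g t) := by fun_prop
  have c3 : Continuous (fun t : ℝ => g t * t * g t) := by fun_prop
  have c4 : Continuous (fun t : ℝ => t - g t * t) := by fun_prop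
  have c5 : Continuous (fun t : ℝ => t - g t * t - t * g t) := by fun_prop
  rw [cfcₙ_add _ _ h c5.continuousOn (by simp [hg0]) c3.continuousOn (by simp [hg0]),
    cfcₙ_sub _ _ h c4.continuousOn (by simp [hg0]) c2.continuousOn (by simp [hg0]),
    cfcₙ_sub _ _ h (by fun_prop) (by simp) c1.continuousOn (by simp [hg0]),
    cfcₙ_mul (fun t : ℝ => g t * t) g h c1.continuousOn (by simp [hg0]) hgc.continuousOn hg0,
    cfcₙ_mul g (fun t : ℝ => t) h hgc.continuousOn hg0 (by fun_prop) (by simp),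
    cfcₙ_mul (fun t : ℝ => t) g h (by fun_prop) (by simp) hgc.continuousOn hg0,
    cfcₙ_id' ℝ h]

lemma mem_her_of_le {k h : A} (hk : 0 ≤ k) (hkh : k ≤ h) : k ∈ her h := by
  have hh : 0 ≤ h := hk.trans hkh
  have hk_sa : IsSelfAdjoint k := .of_nonneg hk
  have hh_sa : IsSelfAdjoint h := .of_nonneg hh
  rw [her, Metric.mem_closure_iff]
  intro δ hδ
  set s : ℝ := 2 * ‖k‖ / δ ^ 2 + 1 with hs_def
  have hs : 0 < s := by positivity
  have hden : ∀ t : ℝ, 0 < s ^ 2 * t ^ 2 + 1 := fun t => by positivity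
  have hgc : Continuous (fun t : ℝ => s ^ 2 * t ^ 2 / (s ^ 2 * t ^ 2 + 1)) :=
    Continuous.div (by fun_prop) (by fun_prop) (fun t => (hden t).ne')
  have hqc : Continuous (fun t : ℝ => s ^ 2 * t / (s ^ 2 * t ^ 2 + 1)) :=
    Continuous.div (by fun_prop) (by fun_prop) (fun t => (hden t).ne')
  set p : A := cfcₙ (fun t : ℝ => s ^ 2 * t ^ 2 / (s ^ 2 * t ^ 2 + 1)) h with hp_def
  set Q : A := cfcₙ (fun t : ℝ => s ^ 2 * t / (s ^ 2 * t ^ 2 + 1)) h with hQ_def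
  have hp_sa : IsSelfAdjoint p := cfcₙ_predicate _ h
  have hpQ : p = h * Q := by
    rw [hp_def, hQ_def]
    have e : (fun t : ℝ => s ^ 2 * t ^ 2 / (s ^ 2 * t ^ 2 + 1)) =
        (fun t : ℝ => t * (s ^ 2 * t / (s ^ 2 * t ^ 2 + 1))) := by
      funext t; field_simp
    rw [e, cfcₙ_mul _ _ h (by fun_prop) (by simp) hqc.continuousOn (by simp), cfcₙ_id' ℝ h]
  have hQp : p = Q * h := by
    rw [hp_def, hQ_def]
    have e : (fun t : ℝ => s ^ 2 * t ^ 2 / (s ^ 2 * t ^ 2 + 1)) =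
        (fun t : ℝ => (s ^ 2 * t / (s ^ 2 * t ^ 2 + 1)) * t) := by
      funext t; field_simp
    rw [e, cfcₙ_mul _ _ h hqc.continuousOn (by simp) (by fun_prop) (by simp), cfcₙ_id' ℝ h]
  -- k * k ≤ ‖k‖ • k
  have hkk : k * k ≤ ‖k‖ • k := by
    have h1 : k * k = cfcₙ (fun t : ℝ => t * t) k := by
      rw [cfcₙ_mul _ _ k (by fun_prop) (by simp) (by fun_prop) (by simp), cfcₙ_id' ℝ k]
    have h2 : ‖k‖ • k = cfcₙ (fun t : ℝ => ‖k‖ * t) k := by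
      rw [cfcₙ_const_mul_id _ k]
    rw [h1, h2]
    refine cfcₙ_mono (fun t ht => ?_) (by fun_prop) (by fun_prop) (by simp) (by simp)
    have h0t := quasi_nonneg hk ht
    have htn := quasi_le_norm hk_sa ht
    rw [abs_of_nonneg h0t] at htn
    nlinarith
  set w : A := k - k * p with hw_def
  have hw_star : star w = k - p * k := by
    rw [hw_def, star_sub, star_mul, hk_sa.star_eq, hp_sa.star_eq]
  have hww : star w * w = k * k - p * (k * k) - (k * k) * p + p * (k * k) * p := by
    rw [hw_star, hw_def]; noncomm_ring
  have hsmul : (‖k‖ • k) - p * (‖k‖ • k) - (‖k‖ • k) * p + p * (‖k‖ • k) * p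
      = ‖k‖ • (k - p * k - k * p + p * k * p) := by
    simp only [smul_sub, smul_add, mul_smul_comm, smul_mul_assoc]
  have step1 : star w * w ≤ ‖k‖ • (h - p * h - h * p + p * h * p) := by
    rw [hww]
    calc k * k - p * (k * k) - (k * k) * p + p * (k * k) * p
        ≤ (‖k‖ • k) - p * (‖k‖ • k) - (‖k‖ • k) * p + p * (‖k‖ • k) * p := conj_mono hp_sa hkk
      _ = ‖k‖ • (k - p * k - k * p + p * k * p) := hsmul
      _ ≤ ‖k‖ • (h - p * h - h * p + p * h * p) :=
          smul_le_smul_of_nonneg_left (conj_mono hp_sa hkh) (norm_nonneg k)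
  have hThn : ‖h - p * h - h * p + p * h * p‖ ≤ 1 / (2 * s) := by
    rw [hp_def, T_cfc _ hgc (by simp) h hh_sa]
    refine norm_cfcₙ_le fun t ht => ?_
    have h0t := quasi_nonneg hh ht
    have e : t - (s ^ 2 * t ^ 2 / (s ^ 2 * t ^ 2 + 1)) * t
          - t * (s ^ 2 * t ^ 2 / (s ^ 2 * t ^ 2 + 1))
          + (s ^ 2 * t ^ 2 / (s ^ 2 * t ^ 2 + 1)) * t * (s ^ 2 * t ^ 2 / (s ^ 2 * t ^ 2 + 1))
        = t / (s ^ 2 * t ^ 2 + 1) ^ 2 := by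
      field_simp
      ring
    rw [e, Real.norm_eq_abs, abs_of_nonneg (by positivity),
      div_le_div_iff₀ (by positivity) (by positivity)]
    nlinarith [sq_nonneg (s * t - 1), sq_nonneg (s * t), hden t, sq_nonneg t]
  have hp_norm : ‖p‖ ≤ 1 := by
    rw [hp_def]
    refine norm_cfcₙ_le fun t ht => ?_
    rw [Real.norm_eq_abs, abs_of_nonneg (by positivity), div_le_one (hden t)]
    nlinarith [sq_nonneg (s * t)]
  have hw_norm_sq : ‖w‖ * ‖w‖ ≤ ‖k‖ * (1 / (2 * s)) := by
    calc ‖w‖ * ‖w‖ = ‖star w * w‖ := (CStarRing.norm_star_mul_self).symm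
      _ ≤ ‖‖k‖ • (h - p * h - h * p + p * h * p)‖ :=
          CStarAlgebra.norm_le_norm_of_nonneg_of_le (star_mul_self_nonneg w) step1
      _ = ‖k‖ * ‖h - p * h - h * p + p * h * p‖ := by
          rw [norm_smul, Real.norm_eq_abs, abs_of_nonneg (norm_nonneg k)]
      _ ≤ ‖k‖ * (1 / (2 * s)) := mul_le_mul_of_nonneg_left hThn (norm_nonneg k)
  refine ⟨p * k * p, ⟨Q * k * Q, ?_⟩, ?_⟩
  · nth_rewrite 1 [hpQ]
    rw [hQp]
    simp [mul_assoc]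
  · rw [dist_eq_norm]
    have hdecomp : k - p * k * p = w + star w * p := by
      rw [hw_def, hw_star]; noncomm_ring
    have hbound : ‖k - p * k * p‖ ≤ 2 * ‖w‖ := by
      rw [hdecomp]
      calc ‖w + star w * p‖ ≤ ‖w‖ + ‖star w * p‖ := norm_add_le _ _
        _ ≤ ‖w‖ + ‖star w‖ * ‖p‖ := by gcongr; exact norm_mul_le _ _
        _ ≤ ‖w‖ + ‖w‖ * 1 := by rw [norm_star]; gcongr
        _ = 2 * ‖w‖ := by ring
    have h5 : 4 * (‖k‖ * (1 / (2 * s))) < δ ^ 2 := by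
      have hsd : s * δ ^ 2 = 2 * ‖k‖ + δ ^ 2 := by
        rw [hs_def]; field_simp
      have e4 : 4 * (‖k‖ * (1 / (2 * s))) = 2 * ‖k‖ / s := by
        field_simp; ring
      rw [e4, div_lt_iff₀ hs]
      nlinarith [sq_nonneg δ]
    have hfinal : 2 * ‖w‖ < δ := by
      have h4 : (2 * ‖w‖) ^ 2 ≤ 4 * (‖k‖ * (1 / (2 * s))) := by nlinarith [norm_nonneg w]
      nlinarith [norm_nonneg w, hδ]
    linarith

lemma sqrt_mem_her {a : A} (ha : 0 ≤ a) : cfcₙ Real.sqrt a ∈ her a := by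
  have ha_sa : IsSelfAdjoint a := .of_nonneg ha
  rw [her, Metric.mem_closure_iff]
  intro δ hδ
  set μ : ℝ := 2 / δ + 1 with hμ_def
  have hμ : 0 < μ := by positivity
  have hden : ∀ t : ℝ, 0 < μ ^ 4 * t ^ 2 + 1 := fun t => by positivity
  have hgc : Continuous (fun t : ℝ => μ ^ 4 * t ^ 2 / (μ ^ 4 * t ^ 2 + 1)) :=
    Continuous.div (by fun_prop) (by fun_prop) (fun t => (hden t).ne')
  have hqc : Continuous (fun t : ℝ => μ ^ 4 * t / (μ ^ 4 * t ^ 2 + 1)) :=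
    Continuous.div (by fun_prop) (by fun_prop) (fun t => (hden t).ne')
  have hsc : Continuous (fun t : ℝ => Real.sqrt t) := Real.continuous_sqrt
  set p : A := cfcₙ (fun t : ℝ => μ ^ 4 * t ^ 2 / (μ ^ 4 * t ^ 2 + 1)) a with hp_def
  set Q : A := cfcₙ (fun t : ℝ => μ ^ 4 * t / (μ ^ 4 * t ^ 2 + 1)) a with hQ_def
  have hpQ : p = a * Q := by
    rw [hp_def, hQ_def]
    have e : (fun t : ℝ => μ ^ 4 * t ^ 2 / (μ ^ 4 * t ^ 2 + 1)) =
        (fun t : ℝ => t * (μ ^ 4 * t / (μ ^ 4 * t ^ 2 + 1))) := by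
      funext t; field_simp
    rw [e, cfcₙ_mul _ _ a (by fun_prop) (by simp) hqc.continuousOn (by simp), cfcₙ_id' ℝ a]
  have hQp : p = Q * a := by
    rw [hp_def, hQ_def]
    have e : (fun t : ℝ => μ ^ 4 * t ^ 2 / (μ ^ 4 * t ^ 2 + 1)) =
        (fun t : ℝ => (μ ^ 4 * t / (μ ^ 4 * t ^ 2 + 1)) * t) := by
      funext t; field_simp
    rw [e, cfcₙ_mul _ _ a hqc.continuousOn (by simp) (by fun_prop) (by simp), cfcₙ_id' ℝ a]
  have hdiff : cfcₙ Real.sqrt a - p * cfcₙ Real.sqrt a * p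
      = cfcₙ (fun t : ℝ => Real.sqrt t - (μ ^ 4 * t ^ 2 / (μ ^ 4 * t ^ 2 + 1)) * Real.sqrt t *
          (μ ^ 4 * t ^ 2 / (μ ^ 4 * t ^ 2 + 1))) a := by
    rw [cfcₙ_sub _ _ a hsc.continuousOn (by simp) (by fun_prop) (by simp),
      cfcₙ_mul (fun t : ℝ => (μ ^ 4 * t ^ 2 / (μ ^ 4 * t ^ 2 + 1)) * Real.sqrt t)
        (fun t : ℝ => μ ^ 4 * t ^ 2 / (μ ^ 4 * t ^ 2 + 1)) a
        (by fun_prop) (by simp) hgc.continuousOn (by simp),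
      cfcₙ_mul _ _ a hgc.continuousOn (by simp) hsc.continuousOn (by simp)]
  refine ⟨p * cfcₙ Real.sqrt a * p, ⟨Q * cfcₙ Real.sqrt a * Q, ?_⟩, ?_⟩
  · nth_rewrite 1 [hpQ]
    rw [hQp]
    simp [mul_assoc]
  · rw [dist_eq_norm, hdiff]
    have hkey : ∀ t ∈ quasispectrum ℝ a,
        ‖Real.sqrt t - (μ ^ 4 * t ^ 2 / (μ ^ 4 * t ^ 2 + 1)) * Real.sqrt t *
          (μ ^ 4 * t ^ 2 / (μ ^ 4 * t ^ 2 + 1))‖ ≤ 2 / μ := by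
      intro t ht
      have h0t := quasi_nonneg ha ht
      obtain ⟨u, hu0, rfl⟩ : ∃ u : ℝ, 0 ≤ u ∧ u ^ 2 = t :=
        ⟨Real.sqrt t, Real.sqrt_nonneg t, Real.sq_sqrt h0t⟩
      rw [Real.sqrt_sq hu0, Real.norm_eq_abs]
      have hd : (0:ℝ) < μ ^ 4 * (u ^ 2) ^ 2 + 1 := hden _
      have e : u - (μ ^ 4 * (u ^ 2) ^ 2 / (μ ^ 4 * (u ^ 2) ^ 2 + 1)) * u *
            (μ ^ 4 * (u ^ 2) ^ 2 / (μ ^ 4 * (u ^ 2) ^ 2 + 1))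
          = u * (2 * μ ^ 4 * u ^ 4 + 1) / (μ ^ 4 * (u ^ 2) ^ 2 + 1) ^ 2 := by
        field_simp
        ring
      rw [e, abs_of_nonneg (by positivity), div_le_div_iff₀ (by positivity) hμ]
      have hv0 : 0 ≤ μ * u := by positivity
      have hv4 : μ * u ≤ (μ * u) ^ 4 + 1 := by
        rcases le_total (μ * u) 1 with h1 | h1
        · nlinarith [pow_nonneg hv0 4]
        · have h2 : 1 ≤ (μ * u) ^ 2 := by nlinarith
          have h3 : μ * u ≤ (μ * u) ^ 2 := by nlinarith
          nlinarith
      have hA : 0 ≤ (μ * u) ^ 4 * ((μ * u) ^ 4 + 1 - μ * u) :=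
        mul_nonneg (pow_nonneg hv0 4) (by linarith)
      nlinarith [hA, hv4, pow_nonneg hv0 4]
    refine lt_of_le_of_lt (norm_cfcₙ_le hkey) ?_
    have hμδ : δ * μ = 2 + δ := by
      rw [hμ_def]; field_simp
    rw [div_lt_iff₀ hμ]
    nlinarith


lemma cutdown_nonneg (a : A) (ε : ℝ) : 0 ≤ cutdown a ε :=
  cfcₙ_nonneg fun t _ => le_max_right _ _

lemma cutdown_le_cutdown (a : A) {ε δ : ℝ} (h0 : 0 ≤ δ) (hδε : δ ≤ ε) :
    cutdown a ε ≤ cutdown a δ := by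
  unfold cutdown
  refine cfcₙ_mono (fun t ht => max_le_max (by linarith) le_rfl) (by fun_prop) (by fun_prop)
    (by simp; linarith) (by simp; linarith)

lemma norm_sub_cutdown {a : A} (ha : 0 ≤ a) {ε : ℝ} (hε : 0 ≤ ε) : ‖a - cutdown a ε‖ ≤ ε := by
  have ha_sa : IsSelfAdjoint a := .of_nonneg ha
  have e : a - cutdown a ε = cfcₙ (fun t : ℝ => t - max (t - ε) 0) a := by
    unfold cutdown
    rw [cfcₙ_sub _ _ a (by fun_prop) (by simp) (by fun_prop) (by simp; linarith), cfcₙ_id' ℝ a]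
  rw [e]
  refine norm_cfcₙ_le fun t ht => ?_
  have h0t := quasi_nonneg ha ht
  rw [Real.norm_eq_abs, abs_le]
  rcases le_total t ε with h | h
  · rw [max_eq_right (by linarith)]; constructor <;> linarith
  · rw [max_eq_left (by linarith)]; constructor <;> linarith

lemma cuntz_of_mem_her {a b : A} (ha : 0 ≤ a) (hb : 0 ≤ b) (hab : a ∈ her b) : CuntzLE a b := by
  intro ε hε
  have hb_sa : IsSelfAdjoint b := .of_nonneg hb
  have ha_sa : IsSelfAdjoint a := .of_nonneg ha
  set s := cfcₙ Real.sqrt a with hs_def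
  have hs_sa : IsSelfAdjoint s := cfcₙ_predicate _ a
  have hss : s * s = a := sqrt_mul_self' a ha
  have hs_mem : s ∈ her b := her_subset_her hab (sqrt_mem_her ha)
  set t := cfcₙ Real.sqrt b with ht_def
  have ht_sa : IsSelfAdjoint t := cfcₙ_predicate _ b
  have htt : t * b * t = b * b := by
    have e1 : cfcₙ (fun x : ℝ => Real.sqrt x * x * Real.sqrt x) b = t * b * t := by
      rw [cfcₙ_mul _ _ b (by fun_prop) (by simp) (by fun_prop) (by simp),
        cfcₙ_mul _ _ b (by fun_prop) (by simp) (by fun_prop) (by simp), cfcₙ_id' ℝ b]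
    have e2 : cfcₙ (fun x : ℝ => Real.sqrt x * x * Real.sqrt x) b
        = cfcₙ (fun x : ℝ => x * x) b := by
      refine cfcₙ_congr fun x hx => ?_
      have h0x := quasi_nonneg hb hx
      show Real.sqrt x * x * Real.sqrt x = x * x
      rw [show Real.sqrt x * x * Real.sqrt x = (Real.sqrt x * Real.sqrt x) * x by ring,
        Real.mul_self_sqrt h0x]
    have e3 : cfcₙ (fun x : ℝ => x * x) b = b * b := by
      rw [cfcₙ_mul _ _ b (by fun_prop) (by simp) (by fun_prop) (by simp), cfcₙ_id' ℝ b]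
    rw [← e1, e2, e3]
  set δ := min 1 (ε / (2 * ‖s‖ + 2)) with hδ_def
  have hδpos : 0 < δ := lt_min one_pos (by positivity)
  obtain ⟨y, hyS, hy⟩ := Metric.mem_closure_iff.mp hs_mem δ hδpos
  obtain ⟨x, rfl⟩ := hyS
  rw [dist_eq_norm] at hy
  set c := (2⁻¹ : ℝ) • (x + star x) with hc_def
  have hc_star : star c = c := by
    rw [hc_def, star_smul, star_add, star_star, star_trivial]
    rw [add_comm]
  set z := b * c * b with hz_def
  have hzy : ‖s - z‖ < δ := by
    have e : s - z = (2⁻¹ : ℝ) • ((s - b * x * b) + (s - b * star x * b)) := by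
      simp only [hz_def, hc_def, mul_smul_comm, smul_mul_assoc, mul_add, add_mul, smul_add,
        smul_sub]
      module
    have hsx : ‖s - b * star x * b‖ = ‖s - b * x * b‖ := by
      have e2 : star (s - b * star x * b) = s - b * x * b := by
        simp [star_sub, star_mul, hs_sa.star_eq, hb_sa.star_eq, mul_assoc]
      rw [← e2, norm_star]
    have hb1 : ‖s - z‖ ≤ 2⁻¹ * (‖s - b * x * b‖ + ‖s - b * star x * b‖) := by
      rw [e, norm_smul]
      simp only [norm_inv, Real.norm_ofNat]
      exact mul_le_mul_of_nonneg_left (norm_add_le _ _) (by norm_num)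
    rw [hsx] at hb1
    linarith
  refine ⟨b * c * t, ?_⟩
  have hstar : star (b * c * t) = t * c * b := by
    simp [star_mul, hb_sa.star_eq, hc_star, ht_sa.star_eq, mul_assoc]
  have hzz : (b * c * t) * b * star (b * c * t) = z * z := by
    rw [hstar, hz_def]
    calc (b*c*t)*b*(t*c*b) = b*c*(t*b*t)*(c*b) := by simp [mul_assoc]
      _ = b*c*(b*b)*(c*b) := by rw [htt]
      _ = (b*c*b)*(b*c*b) := by simp [mul_assoc]
  rw [hzz]
  have hdc : a - z * z = s * (s - z) + (s - z) * z := by rw [← hss]; noncomm_ring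
  have hzn : ‖z‖ ≤ ‖s‖ + δ := by
    calc ‖z‖ = ‖s - (s - z)‖ := by rw [sub_sub_cancel]
      _ ≤ ‖s‖ + ‖s - z‖ := norm_sub_le _ _
      _ ≤ ‖s‖ + δ := by linarith
  have A1 : ‖a - z*z‖ ≤ (‖s‖ + ‖z‖) * ‖s - z‖ := by
    rw [hdc]
    calc ‖s*(s-z) + (s-z)*z‖ ≤ ‖s*(s-z)‖ + ‖(s-z)*z‖ := norm_add_le _ _
      _ ≤ ‖s‖*‖s-z‖ + ‖s-z‖*‖z‖ := add_le_add (norm_mul_le _ _) (norm_mul_le _ _)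
      _ = (‖s‖ + ‖z‖) * ‖s - z‖ := by ring
  have hδ1 : δ ≤ 1 := min_le_left _ _
  have hδ2 : δ * (2*‖s‖+2) ≤ ε := by
    have := min_le_right 1 (ε / (2 * ‖s‖ + 2))
    calc δ * (2*‖s‖+2) ≤ (ε / (2 * ‖s‖ + 2)) * (2*‖s‖+2) := by
          apply mul_le_mul_of_nonneg_right _ (by positivity)
          rw [hδ_def]; exact min_le_right _ _
      _ = ε := by field_simp
  nlinarith [norm_nonneg s, norm_nonneg (s - z), norm_nonneg z, A1, hzn, hzy, hδpos, hδ1, hδ2,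
    mul_le_mul_of_nonneg_left hzy.le (by positivity : (0:ℝ) ≤ ‖s‖ + ‖z‖)]

lemma good_of_cuntz {L : {a : A // 0 ≤ a} → {a : A // 0 ≤ a} → Prop} (hL : CuGood L)
    (a b : {a : A // 0 ≤ a}) (hab : CuntzLE (a : A) (b : A)) : L a b := by
  obtain ⟨hrefl, htrans, h1, h2, h3⟩ := hL
  apply h3
  rintro c ⟨ε, hε, hc⟩
  obtain ⟨x, hx⟩ := hab (ε/2) (by positivity)
  have ha : (0:A) ≤ (a:A) := a.2
  have hb : (0:A) ≤ (b:A) := b.2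
  have ha_sa : IsSelfAdjoint (a:A) := .of_nonneg ha
  have hb_sa : IsSelfAdjoint (b:A) := .of_nonneg hb
  set d := x * (b:A) * star x with hd_def
  have hd_nonneg : 0 ≤ d := star_right_conjugate_nonneg hb x
  have hd_sa : IsSelfAdjoint d := .of_nonneg hd_nonneg
  have hucont : Continuous (fun s : ℝ => Real.sqrt (max (s - ε) 0)) := by fun_prop
  have hu0 : Real.sqrt (max (0 - ε) 0) = 0 := by
    rw [max_eq_right (by linarith), Real.sqrt_zero]
  set r := cfcₙ (fun s : ℝ => Real.sqrt (max (s - ε) 0)) (a:A) with hr_def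
  have hr_sa : IsSelfAdjoint r := cfcₙ_predicate _ _
  have hrr : r * r = cutdown (a:A) ε := by
    unfold cutdown
    rw [hr_def, ← cfcₙ_mul _ _ (a:A) hucont.continuousOn hu0 hucont.continuousOn hu0]
    exact cfcₙ_congr fun s _ => Real.mul_self_sqrt (le_max_right _ _)
  set hh : A := r * d * r with hh_def
  have hh_eq : hh = (r * x) * (b:A) * star (r * x) := by
    rw [hh_def, hd_def, star_mul, hr_sa.star_eq]
    simp [mul_assoc]
  have hh_nonneg : 0 ≤ hh := hh_eq ▸ star_right_conjugate_nonneg hb _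
  have hLh : L ⟨hh, hh_nonneg⟩ b := h2 _ _ ⟨r * x, hh_eq⟩
  set m := d - (a:A) with hm_def
  have hm_sa : IsSelfAdjoint m := hd_sa.sub ha_sa
  have hm_norm : ‖m‖ < ε/2 := by
    rw [hm_def, norm_sub_rev]
    exact hx
  have hmneg_nonneg : 0 ≤ m⁻ := CFC.negPart_nonneg m
  have hmneg_norm : ‖m⁻‖ ≤ ‖m‖ := by
    rw [CFC.negPart_def]
    refine norm_cfcₙ_le fun s hs => ?_
    have habs := quasi_le_norm hm_sa hs
    rw [Real.norm_eq_abs, negPart_def, abs_of_nonneg (le_sup_right)]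
    refine sup_le ?_ (norm_nonneg m)
    have := neg_abs_le s
    linarith
  have hrar : r * (a:A) * r = cfcₙ (fun s : ℝ => s * max (s - ε) 0) (a:A) := by
    have e1 : cfcₙ (fun s : ℝ => Real.sqrt (max (s-ε) 0) * s) (a:A) = r * (a:A) := by
      rw [cfcₙ_mul _ _ (a:A) hucont.continuousOn hu0 (by fun_prop) (by simp),
        cfcₙ_id' ℝ (a:A), hr_def]
    have e2 : cfcₙ (fun s : ℝ => (Real.sqrt (max (s-ε) 0) * s) * Real.sqrt (max (s-ε) 0)) (a:A)
        = (r * (a:A)) * r := by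
      rw [cfcₙ_mul _ _ (a:A) (by fun_prop) (by simp) hucont.continuousOn hu0,
        e1, hr_def]
    rw [← e2]
    refine cfcₙ_congr fun s _ => ?_
    show Real.sqrt (max (s-ε) 0) * s * Real.sqrt (max (s-ε) 0) = s * max (s - ε) 0
    rw [show Real.sqrt (max (s-ε) 0) * s * Real.sqrt (max (s-ε) 0)
      = (Real.sqrt (max (s-ε) 0) * Real.sqrt (max (s-ε) 0)) * s by ring,
      Real.mul_self_sqrt (le_max_right _ _)]
    ring
  have step2 : -(r * m⁻ * r) ≤ r * m * r := by
    have h0 : -m⁻ ≤ m := CFC.neg_negPart_le hm_sa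
    have h5 := star_left_conjugate_le_conjugate h0 r
    rw [hr_sa.star_eq] at h5
    calc -(r * m⁻ * r) = r * -m⁻ * r := by noncomm_ring
      _ ≤ r * m * r := h5
  have step3 : r * m⁻ * r ≤ ‖m⁻‖ • (r * r) := by
    have h5 := CStarAlgebra.star_left_conjugate_le_norm_smul (a := r) (b := m⁻)
      (IsSelfAdjoint.of_nonneg hmneg_nonneg)
    rwa [hr_sa.star_eq] at h5
  have key : (ε/2) • cutdown (a:A) ε ≤ hh := by
    have hd_am : hh = r * (a:A) * r + r * m * r := by
      rw [hh_def, hm_def]; noncomm_ring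
    have hge : r * (a:A) * r - ‖m⁻‖ • (r * r) ≤ hh := by
      rw [hd_am, sub_eq_add_neg]
      refine add_le_add_right ?_ _
      exact (neg_le_neg step3).trans step2
    refine le_trans ?_ hge
    rw [hrr, le_sub_iff_add_le, ← add_smul]
    unfold cutdown
    rw [hrar, ← cfcₙ_const_mul (ε/2 + ‖m⁻‖) _ (a:A) (by fun_prop)
      (by rw [max_eq_right (by linarith)])]
    refine cfcₙ_mono (fun s hs => ?_) (by fun_prop) (by fun_prop)
      (by rw [max_eq_right (by linarith), mul_zero]) (by rw [max_eq_right (by linarith), mul_zero])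
    rcases le_total s ε with h5 | h5
    · rw [max_eq_right (by linarith)]
      simp
    · refine mul_le_mul_of_nonneg_right ?_ (le_max_right _ _)
      linarith
  have hsmul_mem : (ε/2) • cutdown (a:A) ε ∈ her hh :=
    mem_her_of_le (smul_nonneg (by positivity) (cutdown_nonneg _ _)) key
  have hcut_mem : cutdown (a:A) ε ∈ her hh := by
    have h5 := smul_mem_her (2/ε) hsmul_mem
    rw [smul_smul, show (2/ε) * (ε/2) = 1 by field_simp, one_smul] at h5
    exact h5
  have hc_mem : (c:A) ∈ her hh := her_subset_her hcut_mem hc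
  exact htrans (h1 c ⟨hh, hh_nonneg⟩ hc_mem) hLh

/-- the Cuntz subequivalence is the smallest preorder on `A₊` satisfying the
three generating conditions. -/
theorem statement15 :
    CuGood (fun a b : {a : A // 0 ≤ a} => CuntzLE (a : A) (b : A)) ∧
    ∀ L, CuGood L → ∀ a b : {a : A // 0 ≤ a}, CuntzLE (a : A) (b : A) → L a b := by
  constructor
  · refine ⟨?_, ?_, ?_, ?_, ?_⟩
    · intro a
      exact cuntz_of_mem_her a.2 a.2 (mem_her_of_le a.2 le_rfl)
    · intro a b c hab hbc ε hε
      obtain ⟨x, hx⟩ := hab (ε/2) (by positivity)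
      obtain ⟨y, hy⟩ := hbc (ε/(2*(‖x‖*‖x‖+1))) (by positivity)
      refine ⟨x*y, ?_⟩
      have e : (a:A) - (x*y) * (c:A) * star (x*y)
          = ((a:A) - x*(b:A)*star x) + x*((b:A) - y*(c:A)*star y)*star x := by
        rw [star_mul]; noncomm_ring
      have h1 : (0:ℝ) ≤ ‖x‖ := norm_nonneg x
      have h2 : (0:ℝ) ≤ ‖(b:A) - y*(c:A)*star y‖ := norm_nonneg _
      have hE : ε/(2*(‖x‖*‖x‖+1)) * (2*(‖x‖*‖x‖+1)) = ε :=
        div_mul_cancel₀ _ (by positivity)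
      calc ‖(a:A) - (x*y) * (c:A) * star (x*y)‖
          ≤ ‖(a:A) - x*(b:A)*star x‖ + ‖x*((b:A) - y*(c:A)*star y)*star x‖ := by
            rw [e]; exact norm_add_le _ _
        _ ≤ ‖(a:A) - x*(b:A)*star x‖ + ‖x‖*‖(b:A) - y*(c:A)*star y‖*‖x‖ := by
            gcongr
            calc ‖x*((b:A) - y*(c:A)*star y)*star x‖
                ≤ ‖x*((b:A) - y*(c:A)*star y)‖*‖star x‖ := norm_mul_le _ _
              _ ≤ ‖x‖*‖(b:A) - y*(c:A)*star y‖*‖x‖ := by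
                  rw [norm_star]; gcongr; exact norm_mul_le _ _
        _ < ε := by
            nlinarith [hx, hy, hE, mul_le_mul_of_nonneg_left hy.le (mul_nonneg h1 h1),
              mul_nonneg h1 h1]
    · rintro a b hmem
      exact cuntz_of_mem_her a.2 b.2 hmem
    · rintro a b ⟨x, hx⟩ ε hε
      exact ⟨x, by rw [← hx, sub_self, norm_zero]; exact hε⟩
    · rintro a b H ε hε
      have hc0 : 0 ≤ cutdown (a:A) (ε/2) := cutdown_nonneg _ _
      have hmem : cutdown (a:A) (ε/2) ∈ her (cutdown (a:A) (ε/4)) :=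
        mem_her_of_le hc0 (cutdown_le_cutdown _ (by positivity) (by linarith))
      obtain ⟨x, hx⟩ := H ⟨_, hc0⟩ ⟨ε/4, by positivity, hmem⟩ (ε/2) (by positivity)
      refine ⟨x, ?_⟩
      have h1 : ‖(a:A) - cutdown (a:A) (ε/2)‖ ≤ ε/2 := norm_sub_cutdown a.2 (by positivity)
      have h2 : ‖(a:A) - x*(b:A)*star x‖
          ≤ ‖(a:A) - cutdown (a:A) (ε/2)‖ + ‖cutdown (a:A) (ε/2) - x*(b:A)*star x‖ := by
        have := norm_add_le ((a:A) - cutdown (a:A) (ε/2)) (cutdown (a:A) (ε/2) - x*(b:A)*star x)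
        rwa [sub_add_sub_cancel] at this
      simp only at hx
      linarith
  · intro L hL a b hab
    exact good_of_cuntz hL a b hab
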